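/- Let A be an invertible d×d real matrix and V a bounded open subset of ℝ^d such that B(0,ε) ∩ V = ∅ for some ε > 0 and ∪_{j∈ℤ} A^j V = ℝ^d \ {0}. Then there exists a compact set Q ⊆ V such that ∪_{j∈ℤ} A^j Q ⊇ ℝ^d \ {0}. -/
import Mathlib

open MeasureTheory Filter Topology
noncomputable section
abbrev Rd (d : ℕ) := Fin d → ℝ
/-- A real matrix is expansive if all its (complex) eigenvalues have modulus `> 1`. -/
def Expansive {d : ℕ} (A : Matrix (Fin d) (Fin d) ℝ) : Prop :=
  ∀ μ : ℂ, μ ∈ spectrum ℂ (A.map Complex.ofReal) → 1 < ‖μ‖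
/-- The linear action of the integer power `A^j` of `A ∈ GL_d(ℝ)` on `ℝ^d`. -/
def mv {d : ℕ} (A : GL (Fin d) ℝ) (j : ℤ) (x : Rd d) : Rd d :=
  ((A ^ j : GL (Fin d) ℝ) : Matrix (Fin d) (Fin d) ℝ).mulVec x

lemma mv_mv {d : ℕ} (A : GL (Fin d) ℝ) (a b : ℤ) (x : Rd d) :
    mv A a (mv A b x) = mv A (a + b) x := by
  unfold mv
  rw [Matrix.mulVec_mulVec, ← Units.val_mul, ← zpow_add]

lemma mv_zero {d : ℕ} (A : GL (Fin d) ℝ) (x : Rd d) : mv A 0 x = x := by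
  simp [mv]

lemma continuous_mv {d : ℕ} (A : GL (Fin d) ℝ) (j : ℤ) : Continuous (mv A j) :=
  (Matrix.mulVecLin ((A ^ j : GL (Fin d) ℝ) : Matrix (Fin d) (Fin d) ℝ)).continuous_of_finiteDimensional

lemma isOpen_mv_image {d : ℕ} (A : GL (Fin d) ℝ) (j : ℤ) {V : Set (Rd d)} (hV : IsOpen V) :
    IsOpen (mv A j '' V) := by
  have h : mv A j '' V = mv A (-j) ⁻¹' V := by
    ext x
    constructor
    · rintro ⟨z, hz, rfl⟩
      simpa [mv_mv, mv_zero] using hz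
    · intro hx
      exact ⟨mv A (-j) x, hx, by simp [mv_mv, mv_zero]⟩
  rw [h]
  exact hV.preimage (continuous_mv A (-j))

/-- Lemma: if `V` is bounded open, avoids a ball around `0`, and `∪_j A^j V = ℝ^d \ {0}`,
then some compact `Q ⊆ V` also covers `ℝ^d \ {0}` by the dilations `A^j`. -/
theorem stmt10 {d : ℕ} (A : GL (Fin d) ℝ)
    (V : Set (Rd d)) (hVo : IsOpen V) (hVb : Bornology.IsBounded V)
    (ε : ℝ) (hε : 0 < ε) (hdisj : Metric.ball (0 : Rd d) ε ∩ V = ∅)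
    (hcover : (⋃ j : ℤ, mv A j '' V) = {x : Rd d | x ≠ 0}) :
    ∃ Q : Set (Rd d), IsCompact Q ∧ Q ⊆ V ∧
      {x : Rd d | x ≠ 0} ⊆ ⋃ j : ℤ, mv A j '' Q := by
  set C : Set (Rd d) := closure V with hC
  have hCcomp : IsCompact C := hVb.isCompact_closure
  have hCne : ∀ y ∈ C, y ≠ 0 := by
    intro y hy
    have hsub : V ⊆ (Metric.ball (0 : Rd d) ε)ᶜ := by
      intro z hz hzb
      exact Set.eq_empty_iff_forall_notMem.mp hdisj z ⟨hzb, hz⟩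
    have : y ∈ (Metric.ball (0 : Rd d) ε)ᶜ :=
      closure_minimal hsub Metric.isOpen_ball.isClosed_compl hy
    intro h0
    exact this (by rw [h0]; exact Metric.mem_ball_self hε)
  -- for each y in C choose j and a closed ball inside A^j V
  have key : ∀ y ∈ C, ∃ j : ℤ, ∃ r > 0, Metric.closedBall y r ⊆ mv A j '' V := by
    intro y hy
    have hy' : y ∈ ⋃ j : ℤ, mv A j '' V := by
      rw [hcover]; exact hCne y hy
    obtain ⟨j, hj⟩ := Set.mem_iUnion.mp hy'
    have hopen : IsOpen (mv A j '' V) := isOpen_mv_image A j hVo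
    obtain ⟨r, hr, hball⟩ := Metric.nhds_basis_closedBall.mem_iff.mp (hopen.mem_nhds hj)
    exact ⟨j, r, hr, hball⟩
  choose! j r hr hball using key
  have hcov : C ⊆ ⋃ y ∈ C, Metric.ball y (r y) := by
    intro y hy
    exact Set.mem_biUnion hy (Metric.mem_ball_self (hr y hy))
  obtain ⟨t, htC, htcov⟩ := hCcomp.elim_nhds_subcover (fun y => Metric.ball y (r y))
    (fun y hy => Metric.ball_mem_nhds y (hr y hy))
  refine ⟨⋃ y ∈ t, mv A (-(j y)) '' Metric.closedBall y (r y), ?_, ?_, ?_⟩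
  · exact t.isCompact_biUnion (fun y _ =>
      ((isCompact_closedBall y (r y)).image (continuous_mv A (-(j y)))))
  · intro x hx
    obtain ⟨y, hyt, hxy⟩ := Set.mem_iUnion₂.mp hx
    obtain ⟨z, hz, rfl⟩ := hxy
    have hzV := hball y (htC y hyt) hz
    obtain ⟨w, hw, rfl⟩ := hzV
    simpa [mv_mv, mv_zero] using hw
  · intro x hx
    have hx' : x ∈ ⋃ j : ℤ, mv A j '' V := by rw [hcover]; exact hx
    obtain ⟨k, z, hzV, rfl⟩ := Set.mem_iUnion.mp hx'
    have hzC : z ∈ C := subset_closure hzV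
    have := htcov hzC
    obtain ⟨y, hyt, hzy⟩ := Set.mem_iUnion₂.mp this
    refine Set.mem_iUnion.mpr ⟨k + j y, ?_⟩
    refine ⟨mv A (-(j y)) z, ?_, ?_⟩
    · exact Set.mem_biUnion hyt ⟨z, Metric.ball_subset_closedBall hzy, rfl⟩
    · rw [mv_mv]
      ring_nf
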